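/- Let f : V → V′ be a surjective linear map of vector spaces over K (K = ℚ or ℝ). Then f is an open map with respect to the strong topologies on V and V′. -/

import Mathlib

/-- `U` is open in the strong topology on `V`: its preimage under every linear map
from a finite-dimensional coordinate space `K^n` is open. -/
def StrongOpen (K : Type*) [Field K] [LinearOrder K] [IsStrictOrderedRing K] [TopologicalSpace K]
    {V : Type*} [AddCommGroup V] [Module K V] (U : Set V) : Prop :=
  ∀ (n : ℕ) (φ : (Fin n → K) →ₗ[K] V), IsOpen (φ ⁻¹' U)

theorem surjective_linear_strong_openMap (K : Type*) [Field K] [LinearOrder K] [IsStrictOrderedRing K]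
    [TopologicalSpace K] [OrderTopology K] {V V' : Type*} [AddCommGroup V] [Module K V]
    [AddCommGroup V'] [Module K V'] (f : V →ₗ[K] V') (hf : Function.Surjective f) :
    ∀ U : Set V, StrongOpen K U → StrongOpen K (⇑f '' U) := by
  intro U hU n φ
  -- lift φ through f using projectivity of V'
  obtain ⟨ψ, hψ⟩ := Module.projective_lifting_property f φ hf
  rw [isOpen_iff_mem_nhds]
  rintro x ⟨u, huU, hux⟩
  set w : V := u - ψ x with hw
  have hfw : f w = 0 := by
    have := congrArg (fun g => g x) hψ
    simp only [LinearMap.comp_apply] at this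
    simp [hw, map_sub, hux, this, sub_self]
  -- auxiliary linear map on K^(n+1)
  set L : (Fin (n + 1) → K) →ₗ[K] V :=
    ψ.comp (LinearMap.funLeft K K Fin.castSucc) +
      (LinearMap.proj (Fin.last n)).smulRight w with hL
  have hLopen : IsOpen (L ⁻¹' U) := hU (n + 1) L
  have hcont : Continuous (fun y : Fin n → K => (Fin.snoc y 1 : Fin (n+1) → K)) := by
    apply continuous_pi
    intro i
    rcases eq_or_ne i (Fin.last n) with h | h
    · subst h; simpa [Fin.snoc_last] using continuous_const
    · obtain ⟨j, rfl⟩ := Fin.exists_castSucc_eq.2 h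
      simpa [Fin.snoc_castSucc] using continuous_apply j
  have hTopen : IsOpen ((fun y : Fin n → K => (Fin.snoc y 1 : Fin (n+1) → K)) ⁻¹' (L ⁻¹' U)) :=
    hLopen.preimage hcont
  have hLval : ∀ y : Fin n → K, L (Fin.snoc y 1 : Fin (n+1) → K) = ψ y + w := by
    intro y
    simp [hL, LinearMap.funLeft, Fin.snoc_last]
  refine Filter.mem_of_superset (hTopen.mem_nhds ?_) ?_
  · show L (Fin.snoc x 1 : Fin (n+1) → K) ∈ U
    rw [hLval]
    simpa [hw] using huU
  · intro y hy
    have hyU : ψ y + w ∈ U := by rw [← hLval]; exact hy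
    refine ⟨ψ y + w, hyU, ?_⟩
    have : f (ψ y) = φ y := by
      have := congrArg (fun g => g y) hψ
      simpa using this
    simp [map_add, hfw, this]
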